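/- The co-adjoint polynomial is of exponential type: for every finite simple graph G = (V,E) and all x, y, Σ_{S ⊆ V} P(G[S], x) · P(G[V∖S], y) = P(G, x + y), where the sum is over all subsets S of V and P of the empty graph is 1. -/

import Mathlib

open scoped Classical

noncomputable section

/-- Number of connected components of the spanning subgraph with edge set `A`. -/
def numComp {V : Type*} (A : Finset (Sym2 V)) : ℕ :=
  Nat.card (SimpleGraph.fromEdgeSet (↑A : Set (Sym2 V))).ConnectedComponent

/-- The co-adjoint polynomial `P(G,x) = 2^{-|V|} ∑_{A ⊆ E} (2x)^{k(A)} (-2)^{|A|}`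
(for the empty graph on zero vertices this gives `1`). -/
def coadjoint {V : Type*} [Fintype V] (G : SimpleGraph V) (x : ℂ) : ℂ :=
  ((2 : ℂ) ^ Fintype.card V)⁻¹ *
    ∑ A ∈ G.edgeFinset.powerset, (2 * x) ^ numComp A * (-2 : ℂ) ^ A.card

namespace CoadjointAux
open SimpleGraph Finset
set_option linter.unusedSectionVars false
set_option linter.unusedVariables false

variable {V : Type*}

lemma mem_of_walk {H : SimpleGraph V} {S : Set V}
    (hS : ∀ ⦃u v⦄, H.Adj u v → (u ∈ S ↔ v ∈ S)) {a b : V} (w : H.Walk a b) (ha : a ∈ S) :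
    b ∈ S := by
  induction w with
  | nil => exact ha
  | cons h p ih => exact ih ((hS h).1 ha)

lemma mem_of_reachable {H : SimpleGraph V} {S : Set V}
    (hS : ∀ ⦃u v⦄, H.Adj u v → (u ∈ S ↔ v ∈ S)) {a b : V} (h : H.Reachable a b) (ha : a ∈ S) :
    b ∈ S := by
  obtain ⟨w⟩ := h; exact mem_of_walk hS w ha

lemma reach_induce {H : SimpleGraph V} {S : Set V}
    (hS : ∀ ⦃u v⦄, H.Adj u v → (u ∈ S ↔ v ∈ S)) {a b : V} (w : H.Walk a b) :
    ∀ (ha : a ∈ S) (hb : b ∈ S), (H.induce S).Reachable ⟨a, ha⟩ ⟨b, hb⟩ := by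
  induction w with
  | nil => intro ha hb; exact Reachable.refl _
  | @cons u c b h p ih =>
      intro ha hb
      have hc : c ∈ S := (hS h).1 ha
      have hadj : (H.induce S).Adj ⟨u, ha⟩ ⟨c, hc⟩ := h
      exact hadj.reachable.trans (ih hc hb)

/-- the inclusion homomorphism from an induced subgraph -/
def inclHom (H : SimpleGraph V) (S : Set V) : H.induce S →g H :=
  ⟨Subtype.val, fun {u v} h => h⟩

lemma card_cc_induce [Fintype V] {H : SimpleGraph V} {S : Set V}
    (hS : ∀ ⦃u v⦄, H.Adj u v → (u ∈ S ↔ v ∈ S)) :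
    Nat.card (H.induce S).ConnectedComponent
      = (Finset.univ.filter
          (fun C : H.ConnectedComponent => C.supp ⊆ S)).card := by
  have hsupp : ∀ C : (H.induce S).ConnectedComponent,
      (C.map (inclHom H S)).supp ⊆ S := by
    intro C
    induction C using SimpleGraph.ConnectedComponent.ind with
    | _ u =>
      intro w hw
      have hw' : H.connectedComponentMk w = H.connectedComponentMk ↑u := hw
      exact mem_of_reachable hS (SimpleGraph.ConnectedComponent.eq.mp hw'.symm) u.2
  let f : (H.induce S).ConnectedComponent →
      {C : H.ConnectedComponent // C ∈ Finset.univ.filter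
        (fun C : H.ConnectedComponent => C.supp ⊆ S)} :=
    fun C => ⟨C.map (inclHom H S), by simpa using hsupp C⟩
  have hbij : Function.Bijective f := by
    constructor
    · intro C D h
      induction C using SimpleGraph.ConnectedComponent.ind with
      | _ u =>
        induction D using SimpleGraph.ConnectedComponent.ind with
        | _ v =>
          have h' : H.connectedComponentMk ↑u = H.connectedComponentMk ↑v := by
            exact congrArg Subtype.val h
          obtain ⟨w⟩ := SimpleGraph.ConnectedComponent.eq.mp h'
          have := reach_induce hS w u.2 v.2
          exact SimpleGraph.ConnectedComponent.sound (by simpa using this)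
    · rintro ⟨C, hC⟩
      simp only [Finset.mem_filter, Finset.mem_univ, true_and] at hC
      obtain ⟨v, rfl⟩ := C.exists_rep
      have hv : v ∈ S := hC rfl
      exact ⟨(H.induce S).connectedComponentMk ⟨v, hv⟩, Subtype.ext rfl⟩
  calc Nat.card (H.induce S).ConnectedComponent
      = Nat.card {C : H.ConnectedComponent // C ∈ Finset.univ.filter
          (fun C : H.ConnectedComponent => C.supp ⊆ S)} := Nat.card_eq_of_bijective f hbij
    _ = _ := Nat.card_eq_finsetCard _


variable {V : Type*}

/-- push a finset of edges on a subtype up to the ambient type -/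
def emb {S : Set V} (A1 : Finset (Sym2 ↥S)) : Finset (Sym2 V) :=
  A1.map ⟨Sym2.map Subtype.val, Sym2.map.injective Subtype.val_injective⟩

/-- restrict a finset of edges to a subtype -/
def res [Fintype V] (S : Set V) (A : Finset (Sym2 V)) : Finset (Sym2 ↥S) :=
  Finset.univ.filter (fun e => e.map Subtype.val ∈ A)

variable [Fintype V]

@[simp] lemma mem_res {S : Set V} {A : Finset (Sym2 V)} {e : Sym2 ↥S} :
    e ∈ res S A ↔ e.map Subtype.val ∈ A := by simp [res]

@[simp] lemma mem_emb {S : Set V} {A1 : Finset (Sym2 ↥S)} {e : Sym2 V} :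
    e ∈ emb A1 ↔ ∃ e' ∈ A1, e'.map Subtype.val = e := by simp [emb]

lemma res_emb {S : Set V} (A1 : Finset (Sym2 ↥S)) : res S (emb A1) = A1 := by
  ext e
  simp only [mem_res, mem_emb]
  constructor
  · rintro ⟨e', he', h⟩
    rwa [Sym2.map.injective Subtype.val_injective h] at he'
  · intro h; exact ⟨e, h, rfl⟩

lemma res_emb_disjoint {S T : Set V} (h : Disjoint T S) (A1 : Finset (Sym2 ↥T)) :
    res S (emb A1) = ∅ := by
  ext e
  simp only [mem_res, mem_emb, Finset.notMem_empty, iff_false]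
  rintro ⟨e', _, hmap⟩
  induction e using Sym2.inductionOn with
  | hf u v =>
    induction e' using Sym2.inductionOn with
    | hf a b =>
      rw [Sym2.map_pair_eq, Sym2.map_pair_eq, Sym2.eq_iff] at hmap
      have : (↑a : V) ∈ S := by
        rcases hmap with ⟨h1, _⟩ | ⟨h1, _⟩
        · rw [h1]; exact u.2
        · rw [h1]; exact v.2
      exact (h.ne_of_mem a.2 this) rfl

lemma res_union {S : Set V} (A B : Finset (Sym2 V)) :
    res S (A ∪ B) = res S A ∪ res S B := by
  ext e; simp [mem_res]

lemma card_emb {S : Set V} (A1 : Finset (Sym2 ↥S)) : (emb A1).card = A1.card :=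
  Finset.card_map _

lemma emb_disjoint {S T : Set V} (h : Disjoint S T)
    (A1 : Finset (Sym2 ↥S)) (A2 : Finset (Sym2 ↥T)) :
    Disjoint (emb A1) (emb A2) := by
  rw [Finset.disjoint_left]
  intro e he1 he2
  rw [mem_emb] at he1 he2
  obtain ⟨e1, he1', rfl⟩ := he1
  obtain ⟨e2, _, hmap⟩ := he2
  induction e1 using Sym2.inductionOn with
  | hf a b =>
    induction e2 using Sym2.inductionOn with
    | hf c d =>
      rw [Sym2.map_pair_eq, Sym2.map_pair_eq, Sym2.eq_iff] at hmap
      have : (↑a : V) ∈ S := a.2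
      have h2 : (↑a : V) ∈ T := by
        rcases hmap with ⟨h1', _⟩ | ⟨_, h1'⟩
        · rw [← h1']; exact c.2
        · rw [← h1']; exact d.2
      exact (h.ne_of_mem a.2 h2) rfl

/-- `A` is compatible with the vertex split `(S, Sᶜ)`. -/
def Compat (A : Finset (Sym2 V)) (S : Finset V) : Prop :=
  ∀ ⦃u v : V⦄, s(u, v) ∈ A → (u ∈ S ↔ v ∈ S)

lemma emb_res_union {A : Finset (Sym2 V)} {S : Finset V} (hc : Compat A S) :
    emb (res (↑S : Set V) A) ∪ emb (res (↑(Sᶜ) : Set V) A) = A := by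
  apply Finset.Subset.antisymm
  · apply Finset.union_subset <;>
    · intro e he
      simp only [emb, Finset.mem_map, mem_res] at he
      obtain ⟨e', he', rfl⟩ := he
      exact he'
  · intro e he
    induction e using Sym2.inductionOn with
    | hf u v =>
      by_cases hu : u ∈ S
      · have hv : v ∈ S := (hc he).1 hu
        apply Finset.mem_union_left
        simp only [emb, Finset.mem_map, mem_res]
        refine ⟨s(⟨u, hu⟩, ⟨v, hv⟩), ?_, by simp⟩
        simpa using he
      · have hv : v ∉ S := fun hv => hu ((hc he).2 hv)
        apply Finset.mem_union_right
        simp only [emb, Finset.mem_map, mem_res]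
        refine ⟨s(⟨u, by simp [hu]⟩, ⟨v, by simp [hv]⟩), ?_, by simp⟩
        simpa using he

lemma compat_emb_union {S : Finset V}
    (A1 : Finset (Sym2 ↥(↑S : Set V))) (A2 : Finset (Sym2 ↥(↑(Sᶜ) : Set V))) :
    Compat (emb A1 ∪ emb A2) S := by
  intro u v huv
  rw [Finset.mem_union] at huv
  rcases huv with h | h <;>
  · simp only [emb, Finset.mem_map] at h
    obtain ⟨e', _, hmap⟩ := h
    induction e' using Sym2.inductionOn with
    | hf a b =>
      simp only [Function.Embedding.coeFn_mk] at hmap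
      rw [Sym2.map_pair_eq, Sym2.eq_iff] at hmap
      have ha := a.2
      have hb := b.2
      simp only [Finset.coe_compl, Set.mem_compl_iff, Finset.mem_coe] at ha hb
      rcases hmap with ⟨h1, h2⟩ | ⟨h1, h2⟩ <;> subst h1 <;> subst h2 <;> simp [ha, hb]

lemma fromEdgeSet_res (S : Set V) (A : Finset (Sym2 V)) :
    SimpleGraph.fromEdgeSet (↑(res S A) : Set (Sym2 ↥S))
      = (SimpleGraph.fromEdgeSet (↑A : Set (Sym2 V))).induce S := by
  ext u v
  simp only [fromEdgeSet_adj, Finset.mem_coe, mem_res, Sym2.map_pair_eq, comap_adj,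
    Function.Embedding.coe_subtype, ne_eq, Subtype.val_inj]


lemma sum_powerset_pow {α : Type*} [Fintype α] (x y : ℂ) :
    ∑ T ∈ (Finset.univ : Finset α).powerset, x ^ T.card * y ^ (Fintype.card α - T.card)
      = (x + y) ^ Fintype.card α := by
  rw [← Finset.card_univ, ← Finset.prod_const (b := x + y), Finset.prod_add]
  apply Finset.sum_congr rfl
  intro T hT
  rw [Finset.prod_const, Finset.prod_const, Finset.card_sdiff_of_subset (Finset.mem_powerset.mp hT)]

lemma sum_compat (A : Finset (Sym2 V)) (hA : ∀ e ∈ A, ¬ e.IsDiag) (x y : ℂ) :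
    ∑ S ∈ Finset.univ.filter (fun S : Finset V => Compat A S),
      (2 * x) ^ numComp (res (↑S : Set V) A) * (2 * y) ^ numComp (res (↑(Sᶜ) : Set V) A)
    = (2 * x + 2 * y) ^ numComp A := by
  set H := SimpleGraph.fromEdgeSet (↑A : Set (Sym2 V)) with hH
  have hclosed : ∀ {S : Finset V}, Compat A S →
      ∀ ⦃u v : V⦄, H.Adj u v → (u ∈ (↑S : Set V) ↔ v ∈ (↑S : Set V)) := by
    intro S hc u v huv
    rw [hH, SimpleGraph.fromEdgeSet_adj] at huv
    simpa using hc huv.1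
  have hclosedc : ∀ {S : Finset V}, Compat A S →
      ∀ ⦃u v : V⦄, H.Adj u v → (u ∈ (↑(Sᶜ) : Set V) ↔ v ∈ (↑(Sᶜ) : Set V)) := by
    intro S hc u v huv
    simp only [Finset.coe_compl, Set.mem_compl_iff, Finset.mem_coe]
    have := hclosed hc huv
    simp only [Finset.mem_coe] at this
    exact not_iff_not.mpr this
  have hsuppS : ∀ {S : Finset V}, Compat A S → ∀ {v : V}, v ∈ S →
      (H.connectedComponentMk v).supp ⊆ (↑S : Set V) := by
    intro S hc v hv w hw
    have hw' : H.connectedComponentMk w = H.connectedComponentMk v := hw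
    exact mem_of_reachable (hclosed hc) (SimpleGraph.ConnectedComponent.eq.mp hw'.symm) hv
  have hsuppC : ∀ {S : Finset V}, Compat A S → ∀ {v : V}, v ∉ S →
      (H.connectedComponentMk v).supp ⊆ (↑(Sᶜ) : Set V) := by
    intro S hc v hv w hw
    have hw' : H.connectedComponentMk w = H.connectedComponentMk v := hw
    exact mem_of_reachable (hclosedc hc) (SimpleGraph.ConnectedComponent.eq.mp hw'.symm)
      (by simpa using hv)
  have hmemsupp : ∀ v : V, v ∈ (H.connectedComponentMk v).supp := fun v => rfl
  have hres : ∀ {S : Finset V}, Compat A S → numComp (res (↑S : Set V) A)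
      = (Finset.univ.filter
          (fun C : H.ConnectedComponent => C.supp ⊆ (↑S : Set V))).card := by
    intro S hc
    rw [numComp, fromEdgeSet_res, ← hH]
    convert card_cc_induce (hclosed hc) using 3
    ext; simp
  have hresc : ∀ {S : Finset V}, Compat A S → numComp (res (↑(Sᶜ) : Set V) A)
      = (Finset.univ.filter
          (fun C : H.ConnectedComponent => C.supp ⊆ (↑(Sᶜ) : Set V))).card := by
    intro S hc
    rw [numComp, fromEdgeSet_res, ← hH]
    convert card_cc_induce (hclosedc hc) using 3
    ext; simp
  have hcomplfilter : ∀ {S : Finset V}, Compat A S →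
      (Finset.univ.filter (fun C : H.ConnectedComponent => C.supp ⊆ (↑(Sᶜ) : Set V)))
        = (Finset.univ.filter (fun C : H.ConnectedComponent => C.supp ⊆ (↑S : Set V)))ᶜ := by
    intro S hc
    ext C
    obtain ⟨v, rfl⟩ : ∃ v, H.connectedComponentMk v = C := C.exists_rep
    simp only [Finset.mem_filter, Finset.mem_univ, true_and, Finset.mem_compl, not_and]
    constructor
    · intro h1 h2
      have hv1 := h1 (hmemsupp v)
      have hv2 := h2 (hmemsupp v)
      simp only [Finset.coe_compl, Set.mem_compl_iff, Finset.mem_coe] at hv1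
      exact absurd (by simpa using hv2) hv1
    · intro h1
      by_cases hv : v ∈ S
      · exact absurd (hsuppS hc hv) h1
      · exact hsuppC hc hv
  have hk : numComp A = Fintype.card H.ConnectedComponent := by
    rw [numComp, Nat.card_eq_fintype_card]
  rw [hk, ← sum_powerset_pow]
  refine Finset.sum_nbij'
    (fun S => Finset.univ.filter
      (fun C : H.ConnectedComponent => C.supp ⊆ (↑S : Set V)))
    (fun T => Finset.univ.filter (fun v : V => H.connectedComponentMk v ∈ T))
    ?_ ?_ ?_ ?_ ?_
  · intro S hS
    exact Finset.mem_powerset.mpr (Finset.filter_subset _ _)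
  · intro T hT
    simp only [Finset.mem_filter, Finset.mem_univ, true_and]
    intro u v huv
    have hne : u ≠ v := by
      intro h; subst h; exact hA _ huv (Sym2.mk_isDiag_iff.mpr rfl)
    have hadj : H.Adj u v := by
      rw [hH, SimpleGraph.fromEdgeSet_adj]; exact ⟨by simpa using huv, hne⟩
    have hcc : H.connectedComponentMk u = H.connectedComponentMk v :=
      SimpleGraph.ConnectedComponent.sound hadj.reachable
    simp [Finset.mem_filter, hcc]
  · intro S hS
    simp only [Finset.mem_filter, Finset.mem_univ, true_and] at hS
    ext v
    simp only [Finset.mem_filter, Finset.mem_univ, true_and]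
    constructor
    · intro h
      have := h (hmemsupp v)
      simpa using this
    · intro hv
      exact hsuppS hS hv
  · intro T hT
    ext C
    obtain ⟨v, rfl⟩ : ∃ v, H.connectedComponentMk v = C := C.exists_rep
    simp only [Finset.mem_filter, Finset.mem_univ, true_and]
    constructor
    · intro h
      have := h (hmemsupp v)
      simpa using this
    · intro hv w hw
      have hw' : H.connectedComponentMk w = H.connectedComponentMk v := hw
      simp only [Finset.mem_coe, Finset.mem_filter, Finset.mem_univ, true_and]
      rw [hw']
      exact hv
  · intro S hS
    simp only [Finset.mem_filter, Finset.mem_univ, true_and] at hS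
    rw [hres hS, hresc hS, hcomplfilter hS, Finset.card_compl]

lemma mem_induce_edgeSet (G : SimpleGraph V) (s : Set V) (e : Sym2 ↥s) :
    e ∈ (G.induce s).edgeSet ↔ e.map Subtype.val ∈ G.edgeSet := by
  induction e using Sym2.inductionOn with
  | hf u v => simp

lemma coe_disjoint (S : Finset V) : Disjoint (↑S : Set V) (↑(Sᶜ) : Set V) := by
  simp [Finset.coe_compl, disjoint_compl_right]

lemma pair_sum (G : SimpleGraph V) (S : Finset V) (x y : ℂ) :
    (∑ A1 ∈ (G.induce (↑S : Set V)).edgeFinset.powerset,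
        (2 * x) ^ numComp A1 * (-2 : ℂ) ^ A1.card) *
      (∑ A2 ∈ (G.induce (↑(Sᶜ) : Set V)).edgeFinset.powerset,
        (2 * y) ^ numComp A2 * (-2 : ℂ) ^ A2.card)
    = ∑ A ∈ G.edgeFinset.powerset.filter (fun A => Compat A S),
        (2 * x) ^ numComp (res (↑S : Set V) A) * (2 * y) ^ numComp (res (↑(Sᶜ) : Set V) A)
          * (-2 : ℂ) ^ A.card := by
  rw [Finset.sum_mul_sum, ← Finset.sum_product']
  refine Finset.sum_nbij'
    (fun p => emb p.1 ∪ emb p.2)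
    (fun A => (res (↑S : Set V) A, res (↑(Sᶜ) : Set V) A))
    ?_ ?_ ?_ ?_ ?_
  · rintro ⟨A1, A2⟩ hp
    rw [Finset.mem_product] at hp
    obtain ⟨h1, h2⟩ := hp
    rw [Finset.mem_powerset] at h1 h2
    simp only [Finset.mem_filter, Finset.mem_powerset]
    refine ⟨Finset.union_subset ?_ ?_, compat_emb_union A1 A2⟩
    · intro e he
      simp only [mem_emb] at he
      obtain ⟨e', he', rfl⟩ := he
      have h3 := h1 he'
      rw [SimpleGraph.mem_edgeFinset] at h3 ⊢
      exact (mem_induce_edgeSet G _ e').mp h3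
    · intro e he
      simp only [mem_emb] at he
      obtain ⟨e', he', rfl⟩ := he
      have h3 := h2 he'
      rw [SimpleGraph.mem_edgeFinset] at h3 ⊢
      exact (mem_induce_edgeSet G _ e').mp h3
  · intro A hA
    simp only [Finset.mem_filter, Finset.mem_powerset] at hA
    rw [Finset.mem_product]
    constructor <;>
    · rw [Finset.mem_powerset]
      intro e he
      rw [mem_res] at he
      have h3 := hA.1 he
      rw [SimpleGraph.mem_edgeFinset] at h3 ⊢
      exact (mem_induce_edgeSet G _ e).mpr h3
  · rintro ⟨A1, A2⟩ hp
    have hd : Disjoint (↑S : Set V) (↑(Sᶜ) : Set V) := coe_disjoint S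
    dsimp only
    rw [Prod.ext_iff]
    constructor
    · show res (↑S : Set V) (emb A1 ∪ emb A2) = A1
      rw [res_union, res_emb, res_emb_disjoint hd.symm A2, Finset.union_empty]
    · show res (↑(Sᶜ) : Set V) (emb A1 ∪ emb A2) = A2
      rw [res_union, res_emb, res_emb_disjoint hd A1, Finset.empty_union]
  · intro A hA
    simp only [Finset.mem_filter, Finset.mem_powerset] at hA
    exact emb_res_union hA.2
  · rintro ⟨A1, A2⟩ hp
    have hd : Disjoint (↑S : Set V) (↑(Sᶜ) : Set V) := coe_disjoint S
    have h1 : res (↑S : Set V) (emb A1 ∪ emb A2) = A1 := by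
      rw [res_union, res_emb, res_emb_disjoint hd.symm A2, Finset.union_empty]
    have h2 : res (↑(Sᶜ) : Set V) (emb A1 ∪ emb A2) = A2 := by
      rw [res_union, res_emb, res_emb_disjoint hd A1, Finset.empty_union]
    have hcard : (emb A1 ∪ emb A2).card = A1.card + A2.card := by
      rw [Finset.card_union_of_disjoint (emb_disjoint hd A1 A2), card_emb, card_emb]
    rw [h1, h2, hcard, pow_add]
    ring

end CoadjointAux

open CoadjointAux in
/-- the co-adjoint polynomial is of exponential type:
`∑_{S ⊆ V} P(G[S],x) · P(G[V∖S],y) = P(G,x+y)`. -/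
theorem coadjoint_exponential_type {V : Type*} [Fintype V] (G : SimpleGraph V)
    (x y : ℂ) :
    ∑ S : Finset V,
        coadjoint (G.induce (↑S : Set V)) x * coadjoint (G.induce (↑(Sᶜ) : Set V)) y
      = coadjoint G (x + y) := by
  unfold coadjoint
  have step1 : ∀ S : Finset V,
      (((2 : ℂ) ^ Fintype.card ↥(↑S : Set V))⁻¹ *
          ∑ A ∈ (G.induce (↑S : Set V)).edgeFinset.powerset,
            (2 * x) ^ numComp A * (-2 : ℂ) ^ A.card) *
        (((2 : ℂ) ^ Fintype.card ↥(↑(Sᶜ) : Set V))⁻¹ *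
          ∑ A ∈ (G.induce (↑(Sᶜ) : Set V)).edgeFinset.powerset,
            (2 * y) ^ numComp A * (-2 : ℂ) ^ A.card)
      = ((2 : ℂ) ^ Fintype.card V)⁻¹ *
          ∑ A ∈ G.edgeFinset.powerset.filter (fun A => Compat A S),
            (2 * x) ^ numComp (res (↑S : Set V) A) *
              (2 * y) ^ numComp (res (↑(Sᶜ) : Set V) A) * (-2 : ℂ) ^ A.card := by
    intro S
    rw [mul_mul_mul_comm, ← mul_inv, ← pow_add, pair_sum G S x y]
    congr 3
    simp only [Finset.coe_sort_coe, Fintype.card_coe]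
    exact Finset.card_add_card_compl S
  refine (Finset.sum_congr rfl (fun S _ => step1 S)).trans ?_
  simp_rw [← Finset.mul_sum]
  congr 1
  have swap : ∑ S : Finset V,
      ∑ A ∈ G.edgeFinset.powerset.filter (fun A => Compat A S),
        (2 * x) ^ numComp (res (↑S : Set V) A) *
          (2 * y) ^ numComp (res (↑(Sᶜ) : Set V) A) * (-2 : ℂ) ^ A.card
      = ∑ A ∈ G.edgeFinset.powerset,
          ∑ S ∈ Finset.univ.filter (fun S : Finset V => Compat A S),
            (2 * x) ^ numComp (res (↑S : Set V) A) *
              (2 * y) ^ numComp (res (↑(Sᶜ) : Set V) A) * (-2 : ℂ) ^ A.card := by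
    simp_rw [Finset.sum_filter]
    exact Finset.sum_comm
  rw [swap]
  apply Finset.sum_congr rfl
  intro A hA
  rw [Finset.mem_powerset] at hA
  have hdiag : ∀ e ∈ A, ¬ e.IsDiag := by
    intro e he
    exact SimpleGraph.not_isDiag_of_mem_edgeSet G (SimpleGraph.mem_edgeFinset.mp (hA he))
  rw [← Finset.sum_mul, sum_compat A hdiag x y]
  congr 2
  ring
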